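/- Let X and Y be vector spaces over ℝ and let f : X → Y satisfy: (i) f(0) = 0, and (ii) there exist a₀, a₁ ∈ X such that f(a₀) and f(a₁) are linearly independent in Y. Then f is ℝ-linear if and only if f satisfies both: (iii) for every line L ⊆ X, the image f '' L is either a point or a line in Y, and (iv) for every line L ⊆ X, if f '' L is a line in Y then the restriction of f to L is injective. -/

import Mathlib

def IsLine {X : Type*} [AddCommGroup X] [Module ℝ X] (L : Set X) : Prop :=
  ∃ o d : X, d ≠ 0 ∧ L = {x | ∃ r : ℝ, x = r • d + o}

def IsPoint {X : Type*} (S : Set X) : Prop := ∃ p : X, S = {p}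

set_option linter.unusedSectionVars false
set_option linter.unusedVariables false
namespace LinePre

variable {X Y : Type*} [AddCommGroup X] [Module ℝ X] [AddCommGroup Y] [Module ℝ Y]

/-- the line through two points -/
def lt' (p q : X) : Set X := {x | ∃ t : ℝ, x = t • (q - p) + p}

lemma mem_lt_left (p q : X) : p ∈ lt' p q := ⟨0, by simp⟩

lemma mem_lt_right (p q : X) : q ∈ lt' p q := ⟨1, by simp⟩

lemma isLine_lt {p q : X} (h : p ≠ q) : IsLine (lt' p q) :=
  ⟨p, q - p, sub_ne_zero.mpr (Ne.symm h), rfl⟩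

lemma not_isLine_singleton (p : X) : ¬ IsLine ({p} : Set X) := by
  rintro ⟨o, d, hd, h⟩
  have h1 : o ∈ ({p} : Set X) := h ▸ ⟨0, by simp⟩
  have h2 : d + o ∈ ({p} : Set X) := h ▸ ⟨1, by simp⟩
  simp only [Set.mem_singleton_iff] at h1 h2
  rw [h1] at h2
  exact hd (add_eq_right.mp h2)

lemma line_eq_lt {L : Set X} (hL : IsLine L) {p q : X} (hp : p ∈ L) (hq : q ∈ L)
    (hpq : p ≠ q) : L = lt' p q := by
  obtain ⟨o, d, hd, rfl⟩ := hL
  obtain ⟨a, rfl⟩ := hp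
  obtain ⟨b, rfl⟩ := hq
  have hab : b - a ≠ 0 := by
    intro h
    exact hpq (by rw [sub_eq_zero] at h; rw [h])
  ext x
  constructor
  · rintro ⟨r, rfl⟩
    refine ⟨(r - a) / (b - a), ?_⟩
    have h1 : (r - a) / (b - a) * (b - a) = r - a := div_mul_cancel₀ _ hab
    have h2 : b • d + o - (a • d + o) = (b - a) • d := by module
    rw [h2, smul_smul, h1]
    module
  · rintro ⟨t, rfl⟩
    refine ⟨t * (b - a) + a, ?_⟩
    have h2 : b • d + o - (a • d + o) = (b - a) • d := by module
    rw [h2, smul_smul]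
    module


def HLine (f : X → Y) : Prop := ∀ L : Set X, IsLine L → IsPoint (f '' L) ∨ IsLine (f '' L)
def HInj (f : X → Y) : Prop := ∀ L : Set X, IsLine L → IsLine (f '' L) → Set.InjOn f L

lemma collapse {f : X → Y} (hA : HLine f) (hB : HInj f)
    {L : Set X} (hL : IsLine L) {p q : X} (hp : p ∈ L) (hq : q ∈ L) (hpq : p ≠ q)
    (hfpq : f p = f q) : ∀ x ∈ L, f x = f p := by
  rcases hA L hL with ⟨y0, hpt⟩ | hll
  · intro x hx
    have h1 : f x ∈ f '' L := ⟨x, hx, rfl⟩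
    have h2 : f p ∈ f '' L := ⟨p, hp, rfl⟩
    rw [hpt, Set.mem_singleton_iff] at h1 h2
    rw [h1, h2]
  · exact absurd (hB L hL hll hp hq hfpq) hpq

/-- line through 0 with direction d -/
def zl (d : X) : Set X := {x | ∃ r : ℝ, x = r • d + 0}

lemma mem_zl (r : ℝ) (d : X) : r • d ∈ zl d := ⟨r, by simp⟩

lemma zero_mem_zl (d : X) : (0 : X) ∈ zl d := ⟨0, by simp⟩

lemma isLine_zl {d : X} (hd : d ≠ 0) : IsLine (zl d) := ⟨0, d, hd, rfl⟩

lemma zl_image {f : X → Y} (h0 : f 0 = 0) (hA : HLine f) (hB : HInj f)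
    {d : X} (hd : d ≠ 0) (hfd : f d ≠ 0) :
    (f '' zl d) = {y | ∃ t : ℝ, y = t • f d} ∧ Set.InjOn f (zl d) := by
  rcases hA (zl d) (isLine_zl hd) with ⟨y0, hpt⟩ | hll
  · exfalso
    have h1 : f 0 ∈ f '' zl d := ⟨0, zero_mem_zl d, rfl⟩
    have h2 : f d ∈ f '' zl d := ⟨d, by simpa using mem_zl 1 d, rfl⟩
    rw [hpt, Set.mem_singleton_iff] at h1 h2
    rw [h0] at h1
    exact hfd (by rw [h2, ← h1])
  · have h1 : (0 : Y) ∈ f '' zl d := ⟨0, zero_mem_zl d, by rw [h0]⟩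
    have h2 : f d ∈ f '' zl d := ⟨d, by simpa using mem_zl 1 d, rfl⟩
    have heq := line_eq_lt hll h1 h2 (Ne.symm hfd)
    constructor
    · rw [heq]
      ext y
      simp only [lt', sub_zero, add_zero, Set.mem_setOf_eq]
    · exact hB _ (isLine_zl hd) hll

open Classical in
/-- the scaling function along direction d -/
noncomputable def sig (f : X → Y) (d : X) (r : ℝ) : ℝ :=
  if h : ∃ t : ℝ, f (r • d) = t • f d then h.choose else 0

lemma smul_cancel {t s : ℝ} {z : Y} (hz : z ≠ 0) (h : t • z = s • z) : t = s :=
  smul_left_injective ℝ hz h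

lemma sig_spec {f : X → Y} (h0 : f 0 = 0) (hA : HLine f) (hB : HInj f)
    {d : X} (hd : d ≠ 0) (hfd : f d ≠ 0) (r : ℝ) :
    f (r • d) = sig f d r • f d := by
  have hmem : f (r • d) ∈ f '' zl d := ⟨r • d, mem_zl r d, rfl⟩
  rw [(zl_image h0 hA hB hd hfd).1] at hmem
  obtain ⟨t, ht⟩ := hmem
  have hex : ∃ t : ℝ, f (r • d) = t • f d := ⟨t, ht⟩
  rw [sig, dif_pos hex]
  exact hex.choose_spec

lemma sig_inj {f : X → Y} (h0 : f 0 = 0) (hA : HLine f) (hB : HInj f)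
    {d : X} (hd : d ≠ 0) (hfd : f d ≠ 0) {r s : ℝ}
    (h : sig f d r = sig f d s) : r = s := by
  have h1 : f (r • d) = f (s • d) := by
    rw [sig_spec h0 hA hB hd hfd r, sig_spec h0 hA hB hd hfd s, h]
  have h2 := (zl_image h0 hA hB hd hfd).2 (mem_zl r d) (mem_zl s d) h1
  exact smul_left_injective ℝ hd h2

lemma sig_surj {f : X → Y} (h0 : f 0 = 0) (hA : HLine f) (hB : HInj f)
    {d : X} (hd : d ≠ 0) (hfd : f d ≠ 0) (t : ℝ) :
    ∃ r : ℝ, sig f d r = t := by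
  have hmem : t • f d ∈ f '' zl d := by
    rw [(zl_image h0 hA hB hd hfd).1]; exact ⟨t, rfl⟩
  obtain ⟨x, ⟨r, rfl⟩, hx⟩ := hmem
  refine ⟨r, ?_⟩
  have h1 : f (r • d) = t • f d := by rw [← hx]; congr 1; abel
  rw [sig_spec h0 hA hB hd hfd r] at h1
  exact smul_cancel hfd h1

lemma sig_zero {f : X → Y} (h0 : f 0 = 0) (hA : HLine f) (hB : HInj f)
    {d : X} (hd : d ≠ 0) (hfd : f d ≠ 0) : sig f d 0 = 0 := by
  have h1 := sig_spec h0 hA hB hd hfd 0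
  rw [zero_smul, h0] at h1
  exact (smul_cancel hfd (by rw [← h1, zero_smul])).symm

lemma sig_one {f : X → Y} (h0 : f 0 = 0) (hA : HLine f) (hB : HInj f)
    {d : X} (hd : d ≠ 0) (hfd : f d ≠ 0) : sig f d 1 = 1 := by
  have h1 := sig_spec h0 hA hB hd hfd 1
  rw [one_smul] at h1
  exact (smul_cancel hfd (by rw [← h1, one_smul])).symm

lemma sig_ne_zero {f : X → Y} (h0 : f 0 = 0) (hA : HLine f) (hB : HInj f)
    {d : X} (hd : d ≠ 0) (hfd : f d ≠ 0) {r : ℝ} (hr : r ≠ 0) : sig f d r ≠ 0 := by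
  intro h
  exact hr (sig_inj h0 hA hB hd hfd (by rw [h, sig_zero h0 hA hB hd hfd]))


section Grid

variable {f : X → Y} {u v : X}

lemma fu_ne (h0 : f 0 = 0) (hUV : ∀ r s : ℝ, r • f u + s • f v = 0 → r = 0 ∧ s = 0) :
    f u ≠ 0 := by
  intro h
  have := hUV 1 0 (by rw [h]; simp)
  exact one_ne_zero this.1

lemma hUV_swap (hUV : ∀ r s : ℝ, r • f u + s • f v = 0 → r = 0 ∧ s = 0) :
    ∀ r s : ℝ, r • f v + s • f u = 0 → r = 0 ∧ s = 0 := by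
  intro r s h
  have := hUV s r (by rw [← h]; abel)
  exact ⟨this.2, this.1⟩

lemma fv_ne (h0 : f 0 = 0) (hUV : ∀ r s : ℝ, r • f u + s • f v = 0 → r = 0 ∧ s = 0) :
    f v ≠ 0 := fu_ne h0 (hUV_swap hUV)

lemma u_ne (h0 : f 0 = 0) (hUV : ∀ r s : ℝ, r • f u + s • f v = 0 → r = 0 ∧ s = 0) :
    u ≠ 0 := by
  intro h
  exact fu_ne h0 hUV (by rw [h, h0])

lemma v_ne (h0 : f 0 = 0) (hUV : ∀ r s : ℝ, r • f u + s • f v = 0 → r = 0 ∧ s = 0) :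
    v ≠ 0 := u_ne h0 (hUV_swap hUV)

lemma coords (hUV : ∀ r s : ℝ, r • f u + s • f v = 0 → r = 0 ∧ s = 0)
    {p q p' q' : ℝ} (h : p • f u + q • f v = p' • f u + q' • f v) :
    p = p' ∧ q = q' := by
  have h2 : (p - p') • f u + (q - q') • f v
      = (p • f u + q • f v) - (p' • f u + q' • f v) := by module
  rw [h, sub_self] at h2
  obtain ⟨h3, h4⟩ := hUV _ _ h2
  exact ⟨sub_eq_zero.mp h3, sub_eq_zero.mp h4⟩

lemma indepX (h0 : f 0 = 0) (hA : HLine f) (hB : HInj f)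
    (hUV : ∀ r s : ℝ, r • f u + s • f v = 0 → r = 0 ∧ s = 0) :
    ∀ r s : ℝ, r • u + s • v = 0 → r = 0 ∧ s = 0 := by
  intro r s h
  have hfu := fu_ne h0 hUV
  have hfv := fv_ne h0 hUV
  have hu := u_ne h0 hUV
  by_cases hs : s = 0
  · subst hs
    refine ⟨?_, rfl⟩
    by_contra hr
    rw [zero_smul, add_zero] at h
    rcases smul_eq_zero.mp h with h' | h'
    · exact hr h'
    · exact hu h'
  · exfalso
    have h5 : s • v - (-r) • u = r • u + s • v := by module
    rw [h, ← sub_eq_zero] at h5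
    rw [sub_zero] at h5
    have h6 : v = ((-r)/s) • u := by
      calc v = s⁻¹ • (s • v) := by rw [smul_smul, inv_mul_cancel₀ hs, one_smul]
        _ = s⁻¹ • ((-r) • u) := by rw [sub_eq_zero.mp h5]
        _ = ((-r)/s) • u := by rw [smul_smul]; ring_nf
    have h7 : f v = sig f u ((-r)/s) • f u := by
      rw [h6]; exact sig_spec h0 hA hB hu (fu_ne h0 hUV) _
    have h8 := hUV (sig f u ((-r)/s)) (-1) (by rw [h7]; module)
    norm_num at h8

lemma cross (h0 : f 0 = 0) (hA : HLine f) (hB : HInj f)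
    (hUV : ∀ r s : ℝ, r • f u + s • f v = 0 → r = 0 ∧ s = 0)
    {a b : ℝ} (ha : a ≠ 0) (hb : b ≠ 0) :
    ∃ t : ℝ, f (a • u + b • v)
      = ((1 - t) * sig f u (2*a)) • f u + (t * sig f v (2*b)) • f v := by
  have hfu := fu_ne h0 hUV
  have hfv := fv_ne h0 hUV
  have hu := u_ne h0 hUV
  have hv := v_ne h0 hUV
  set A : X := (2*a) • u with hAdef
  set B : X := (2*b) • v with hBdef
  have hAB : A ≠ B := by
    intro h
    have h2 : (2*a) • u + (-(2*b)) • v = 0 := by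
      rw [hAdef, hBdef] at h
      have : (2*a) • u + (-(2*b)) • v = (2*a) • u - (2*b) • v := by module
      rw [this, h]; abel
    have := (indepX h0 hA hB hUV _ _ h2).1
    exact ha (by linarith)
  have hmem : a • u + b • v ∈ lt' A B := ⟨1/2, by rw [hAdef, hBdef]; module⟩
  have hfA : f A = sig f u (2*a) • f u := sig_spec h0 hA hB hu hfu _
  have hfB : f B = sig f v (2*b) • f v := sig_spec h0 hA hB hv hfv _
  have hfAB : f A ≠ f B := by
    intro h
    rw [hfA, hfB] at h
    have h2 : sig f u (2*a) • f u + (-(sig f v (2*b))) • f v = 0 := by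
      rw [neg_smul, ← h]; abel
    have := (hUV _ _ h2).1
    exact sig_ne_zero h0 hA hB hu hfu (by positivity) this
  rcases hA (lt' A B) (isLine_lt hAB) with ⟨y0, hpt⟩ | hll
  · exfalso
    have h1 : f A ∈ f '' lt' A B := ⟨A, mem_lt_left A B, rfl⟩
    have h2 : f B ∈ f '' lt' A B := ⟨B, mem_lt_right A B, rfl⟩
    rw [hpt, Set.mem_singleton_iff] at h1 h2
    exact hfAB (h1.trans h2.symm)
  · have heq := line_eq_lt hll ⟨A, mem_lt_left A B, rfl⟩ ⟨B, mem_lt_right A B, rfl⟩ hfAB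
    have hm2 : f (a • u + b • v) ∈ f '' lt' A B := ⟨_, hmem, rfl⟩
    rw [heq] at hm2
    obtain ⟨t, ht⟩ := hm2
    exact ⟨t, by rw [ht, hfA, hfB]; module⟩

lemma plane (h0 : f 0 = 0) (hA : HLine f) (hB : HInj f)
    (hUV : ∀ r s : ℝ, r • f u + s • f v = 0 → r = 0 ∧ s = 0) (a b : ℝ) :
    ∃ p q : ℝ, f (a • u + b • v) = p • f u + q • f v := by
  have hfu := fu_ne h0 hUV
  have hfv := fv_ne h0 hUV
  have hu := u_ne h0 hUV
  have hv := v_ne h0 hUV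
  by_cases ha : a = 0
  · refine ⟨0, sig f v b, ?_⟩
    rw [ha, zero_smul, zero_add, zero_smul, zero_add]
    exact sig_spec h0 hA hB hv hfv b
  · by_cases hb : b = 0
    · refine ⟨sig f u a, 0, ?_⟩
      rw [hb, zero_smul, add_zero, zero_smul, add_zero]
      exact sig_spec h0 hA hB hu hfu a
    · obtain ⟨t, ht⟩ := cross h0 hA hB hUV ha hb
      exact ⟨_, _, ht⟩

lemma vline (h0 : f 0 = 0) (hA : HLine f) (hB : HInj f)
    (hUV : ∀ r s : ℝ, r • f u + s • f v = 0 → r = 0 ∧ s = 0) (a b : ℝ) :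
    ∃ t : ℝ, f (a • u + b • v) = sig f u a • f u + t • f v := by
  have hfu := fu_ne h0 hUV
  have hfv := fv_ne h0 hUV
  have hu := u_ne h0 hUV
  have hv := v_ne h0 hUV
  by_cases ha : a = 0
  · refine ⟨sig f v b, ?_⟩
    rw [ha, sig_zero h0 hA hB hu hfu, zero_smul, zero_add, zero_smul, zero_add]
    exact sig_spec h0 hA hB hv hfv b
  set Va : Set X := {x | ∃ t : ℝ, x = t • v + a • u} with hVadef
  have hVa : IsLine Va := ⟨a • u, v, hv, rfl⟩
  have hmem : ∀ c : ℝ, a • u + c • v ∈ Va := fun c => ⟨c, by module⟩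
  have hCu : ∀ c : ℝ, c • u = c • u + (0:ℝ) • v := fun c => by module
  rcases hA Va hVa with ⟨y0, hpt⟩ | hll
  · exfalso
    have e0 : f (a • u + (0:ℝ) • v) = y0 := by
      have h1 : f (a • u + (0:ℝ) • v) ∈ f '' Va := ⟨_, hmem 0, rfl⟩
      rwa [hpt, Set.mem_singleton_iff] at h1
    have e1 : f (a • u + (1:ℝ) • v) = y0 := by
      have h1 : f (a • u + (1:ℝ) • v) ∈ f '' Va := ⟨_, hmem 1, rfl⟩
      rwa [hpt, Set.mem_singleton_iff] at h1
    have v0 : f (a • u + (0:ℝ) • v) = sig f u a • f u + (0:ℝ) • f v := by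
      rw [show a • u + (0:ℝ) • v = a • u by module,
        show sig f u a • f u + (0:ℝ) • f v = sig f u a • f u by module]
      exact sig_spec h0 hA hB hu hfu a
    obtain ⟨t, v1⟩ := cross h0 hA hB hUV ha (one_ne_zero)
    have heq2 : sig f u a • f u + (0:ℝ) • f v
        = ((1 - t) * sig f u (2*a)) • f u + (t * sig f v (2*1)) • f v := by
      rw [← v0, ← v1, e0, e1]
    obtain ⟨hc1, hc2⟩ := coords hUV heq2
    have hsv2 : sig f v (2*1) ≠ 0 := sig_ne_zero h0 hA hB hv hfv (by norm_num)
    have ht0 : t = 0 := by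
      rcases mul_eq_zero.mp hc2.symm with h' | h'
      · exact h'
      · exact absurd h' hsv2
    rw [ht0] at hc1
    norm_num at hc1
    have := sig_inj h0 hA hB hu hfu hc1
    exact ha (by linarith)
  · have hinjVa := hB Va hVa hll
    -- no element of the image is a multiple of f v
    have hdisj : ∀ x ∈ Va, ∀ c : ℝ, f x = c • f v → False := by
      rintro x ⟨t0, rfl⟩ c hfx
      rw [show t0 • v + a • u = a • u + t0 • v by module] at hfx
      by_cases ht0 : t0 = 0
      · rw [ht0, zero_smul, add_zero] at hfx
        rw [sig_spec h0 hA hB hu hfu a] at hfx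
        have h2 : sig f u a • f u + (-c) • f v = 0 := by rw [neg_smul, ← hfx]; abel
        exact ha (sig_inj h0 hA hB hu hfu
          (by rw [(hUV _ _ h2).1, sig_zero h0 hA hB hu hfu]))
      · obtain ⟨l, hl⟩ := cross h0 hA hB hUV ha ht0
        have heq2 : ((1 - l) * sig f u (2*a)) • f u + (l * sig f v (2*t0)) • f v
            = (0:ℝ) • f u + c • f v := by rw [← hl, hfx, zero_smul, zero_add]
        obtain ⟨hc1, hc2⟩ := coords hUV heq2
        have hl1 : l = 1 := by
          rcases mul_eq_zero.mp hc1 with h' | h'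
          · linarith
          · exact absurd h' (sig_ne_zero h0 hA hB hu hfu (by positivity))
        rw [hl1, one_mul] at hc2
        -- f (a•u + t0•v) = f ((2*t0)•v)
        have key : f (a • u + t0 • v) = f ((2*t0) • v) := by
          rw [hfx, sig_spec h0 hA hB hv hfv, hc2]
        set P : X := a • u + t0 • v with hPdef
        set Q : X := (2*t0) • v with hQdef
        have hPQ : P ≠ Q := by
          intro h
          have h2 : a • u + (-t0) • v = 0 := by
            rw [show a • u + (-t0) • v = P - Q by rw [hPdef, hQdef]; module, h, sub_self]
          exact ha (indepX h0 hA hB hUV _ _ h2).1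
        have hcol := collapse hA hB (isLine_lt hPQ) (mem_lt_left P Q) (mem_lt_right P Q) hPQ key
        have hz : ((-1:ℝ) • (Q - P) + P) = (2*a) • u := by rw [hPdef, hQdef]; module
        have hzmem : ((-1:ℝ) • (Q - P) + P) ∈ lt' P Q := ⟨-1, rfl⟩
        have h3 := hcol _ hzmem
        rw [hz, sig_spec h0 hA hB hu hfu, key, sig_spec h0 hA hB hv hfv] at h3
        have h4 : sig f u (2*a) • f u + (- sig f v (2*t0)) • f v = 0 := by
          rw [neg_smul, ← h3]; abel
        exact sig_ne_zero h0 hA hB hu hfu (by positivity) (hUV _ _ h4).1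
    -- the image is a line; get its direction
    obtain ⟨o, e, he, hM⟩ := hll
    have hoIm : o ∈ f '' Va := by rw [hM]; exact ⟨0, by module⟩
    have heoIm : e + o ∈ f '' Va := by rw [hM]; exact ⟨1, by rw [one_smul]⟩
    have hplane : ∀ y ∈ f '' Va, ∃ p q : ℝ, y = p • f u + q • f v := by
      rintro y ⟨x, ⟨t0, rfl⟩, rfl⟩
      rw [show t0 • v + a • u = a • u + t0 • v by module]
      exact plane h0 hA hB hUV a t0
    obtain ⟨o1, o2, ho⟩ := hplane o hoIm
    obtain ⟨p1, p2, hp⟩ := hplane (e + o) heoIm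
    have hedec : e = (p1 - o1) • f u + (p2 - o2) • f v := by
      have : e = (e + o) - o := by abel
      rw [this, hp, ho]; module
    have he1 : p1 - o1 = 0 := by
      by_contra he1
      set r : ℝ := -o1/(p1 - o1) with hrdef
      have hmemY : r • e + o ∈ f '' Va := by rw [hM]; exact ⟨r, rfl⟩
      obtain ⟨x1, hx1, hfx1⟩ := hmemY
      apply hdisj x1 hx1 (r * (p2 - o2) + o2)
      rw [hfx1, hedec, ho]
      have hr1 : r * (p1 - o1) + o1 = 0 := by rw [hrdef]; field_simp; ring
      match_scalars
      · linarith
      · ring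
    have he2 : p2 - o2 ≠ 0 := by
      intro h
      apply he
      rw [hedec, he1, h, zero_smul, zero_smul, add_zero]
    -- f (a•u) and f (a•u+b•v) are both in the image
    have hau : f (a • u + (0:ℝ) • v) ∈ f '' Va := ⟨_, hmem 0, rfl⟩
    have hab : f (a • u + b • v) ∈ f '' Va := ⟨_, hmem b, rfl⟩
    rw [hM] at hau hab
    obtain ⟨r0, hr0⟩ := hau
    obtain ⟨r1, hr1⟩ := hab
    refine ⟨(r1 - r0) * (p2 - o2), ?_⟩
    have hstep : f (a • u + b • v) = (r1 - r0) • e + f (a • u + (0:ℝ) • v) := by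
      rw [hr0, hr1]; module
    rw [hstep, ← hCu a, sig_spec h0 hA hB hu hfu a, hedec, he1]
    module

lemma gridS (h0 : f 0 = 0) (hA : HLine f) (hB : HInj f)
    (hUV : ∀ r s : ℝ, r • f u + s • f v = 0 → r = 0 ∧ s = 0) (a b : ℝ) :
    f (a • u + b • v) = sig f u a • f u + sig f v b • f v := by
  obtain ⟨t, h1⟩ := vline h0 hA hB hUV a b
  obtain ⟨t', h2⟩ := vline h0 hA hB (hUV_swap hUV) b a
  rw [show b • v + a • u = a • u + b • v by module] at h2
  have h3 : sig f u a • f u + t • f v = t' • f u + sig f v b • f v := by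
    rw [← h1, h2]; abel
  obtain ⟨-, hc2⟩ := coords hUV h3
  rw [h1, hc2]

lemma fw_eq (h0 : f 0 = 0) (hA : HLine f) (hB : HInj f)
    (hUV : ∀ r s : ℝ, r • f u + s • f v = 0 → r = 0 ∧ s = 0) :
    f (u + v) = f u + f v := by
  have h1 := gridS h0 hA hB hUV 1 1
  rw [sig_one h0 hA hB (u_ne h0 hUV) (fu_ne h0 hUV),
    sig_one h0 hA hB (v_ne h0 hUV) (fv_ne h0 hUV)] at h1
  rw [show u + v = (1:ℝ) • u + (1:ℝ) • v by module, h1, one_smul, one_smul]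

lemma fw_ne (h0 : f 0 = 0) (hA : HLine f) (hB : HInj f)
    (hUV : ∀ r s : ℝ, r • f u + s • f v = 0 → r = 0 ∧ s = 0) :
    f (u + v) ≠ 0 := by
  rw [fw_eq h0 hA hB hUV]
  intro h
  have := hUV 1 1 (by rw [one_smul, one_smul, h])
  exact one_ne_zero this.1

lemma sig_eq (h0 : f 0 = 0) (hA : HLine f) (hB : HInj f)
    (hUV : ∀ r s : ℝ, r • f u + s • f v = 0 → r = 0 ∧ s = 0) (t : ℝ) :
    sig f u t = sig f v t ∧ sig f v t = sig f (u + v) t := by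
  have hfw := fw_ne h0 hA hB hUV
  have hw : u + v ≠ 0 := fun h => hfw (by rw [h, h0])
  have h1 : f (t • (u + v)) = sig f (u + v) t • f (u + v) := sig_spec h0 hA hB hw hfw t
  rw [fw_eq h0 hA hB hUV] at h1
  rw [show t • (u + v) = t • u + t • v by module] at h1
  rw [smul_add] at h1
  have h2 := gridS h0 hA hB hUV t t
  have h3 : sig f u t • f u + sig f v t • f v
      = sig f (u + v) t • f u + sig f (u + v) t • f v := by rw [← h2, h1]
  obtain ⟨hc1, hc2⟩ := coords hUV h3
  exact ⟨hc1.trans hc2.symm, hc2⟩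

lemma sig_add (h0 : f 0 = 0) (hA : HLine f) (hB : HInj f)
    (hUV : ∀ r s : ℝ, r • f u + s • f v = 0 → r = 0 ∧ s = 0) (t c : ℝ) :
    sig f u (t + c) = sig f u t + sig f u c := by
  have hfu := fu_ne h0 hUV
  have hfv := fv_ne h0 hUV
  have hu := u_ne h0 hUV
  have hv := v_ne h0 hUV
  by_cases hc : c = 0
  · rw [hc, add_zero, sig_zero h0 hA hB hu hfu, add_zero]
  have hfw := fw_ne h0 hA hB hUV
  have hw : u + v ≠ 0 := fun h => hfw (by rw [h, h0])
  set Dc : Set X := {x | ∃ s : ℝ, x = s • (u + v) + c • v} with hDcdef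
  have hDc : IsLine Dc := ⟨c • v, u + v, hw, rfl⟩
  have hmemD : ∀ s : ℝ, s • u + (s + c) • v ∈ Dc := fun s => ⟨s, by module⟩
  have hval : ∀ x ∈ Dc, ∃ s : ℝ, f x = sig f u s • f u + sig f v (s + c) • f v := by
    rintro x ⟨s, rfl⟩
    refine ⟨s, ?_⟩
    rw [show s • (u + v) + c • v = s • u + (s + c) • v by module]
    exact gridS h0 hA hB hUV s (s + c)
  rcases hA Dc hDc with ⟨y0, hpt⟩ | hll
  · exfalso
    have g0 : f ((0:ℝ) • u + ((0:ℝ) + c) • v) = y0 := by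
      have h1 : f ((0:ℝ) • u + ((0:ℝ) + c) • v) ∈ f '' Dc := ⟨_, hmemD 0, rfl⟩
      rwa [hpt, Set.mem_singleton_iff] at h1
    have g1 : f ((1:ℝ) • u + ((1:ℝ) + c) • v) = y0 := by
      have h1 : f ((1:ℝ) • u + ((1:ℝ) + c) • v) ∈ f '' Dc := ⟨_, hmemD 1, rfl⟩
      rwa [hpt, Set.mem_singleton_iff] at h1
    have h3 : sig f u (0:ℝ) • f u + sig f v ((0:ℝ) + c) • f v
        = sig f u (1:ℝ) • f u + sig f v ((1:ℝ) + c) • f v := by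
      rw [← gridS h0 hA hB hUV, ← gridS h0 hA hB hUV, g0, g1]
    have hc1 := (coords hUV h3).1
    have := sig_inj h0 hA hB hu hfu hc1
    norm_num at this
  · obtain ⟨o, e, he, hM⟩ := hll
    have hoIm : o ∈ f '' Dc := by rw [hM]; exact ⟨0, by module⟩
    have heoIm : e + o ∈ f '' Dc := by rw [hM]; exact ⟨1, by rw [one_smul]⟩
    obtain ⟨x0, hx0, hfx0⟩ := hoIm
    obtain ⟨x1, hx1, hfx1⟩ := heoIm
    obtain ⟨s0, ho⟩ := hval x0 hx0
    obtain ⟨s1, hp⟩ := hval x1 hx1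
    rw [hfx0] at ho
    rw [hfx1] at hp
    set O1 : ℝ := sig f u s0 with hO1
    set O2 : ℝ := sig f v (s0 + c) with hO2
    set E1 : ℝ := sig f u s1 - O1 with hE1
    set E2 : ℝ := sig f v (s1 + c) - O2 with hE2
    have hedec : e = E1 • f u + E2 • f v := by
      have h4 : e = (e + o) - o := by abel
      rw [h4, hp, ho, hE1, hE2]; module
    have hEeq : E1 = E2 := by
      by_contra hne
      set r : ℝ := (O2 - O1) / (E1 - E2) with hrdef
      have hmemY : r • e + o ∈ f '' Dc := by rw [hM]; exact ⟨r, rfl⟩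
      obtain ⟨x2, hx2, hfx2⟩ := hmemY
      obtain ⟨s2, hs2⟩ := hval x2 hx2
      rw [hfx2] at hs2
      have hr1 : r * (E1 - E2) = O2 - O1 := by
        rw [hrdef]; exact div_mul_cancel₀ _ (sub_ne_zero.mpr hne)
      have h5 : sig f u s2 • f u + sig f v (s2 + c) • f v
          = (r * E1 + O1) • f u + (r * E1 + O1) • f v := by
        rw [← hs2, hedec, ho]
        match_scalars
        · ring
        · linarith
      obtain ⟨hc1, hc2⟩ := coords hUV h5
      have h6 : sig f u (s2 + c) = sig f u s2 := by
        rw [(sig_eq h0 hA hB hUV (s2 + c)).1, hc2, hc1]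
      have := sig_inj h0 hA hB hu hfu h6
      exact hc (by linarith)
    have hE10 : E1 ≠ 0 := by
      intro h
      apply he
      rw [hedec, h, ← hEeq, h, zero_smul, zero_smul, add_zero]
    -- now compute
    have hyt : f (t • u + (t + c) • v) ∈ f '' Dc := ⟨_, hmemD t, rfl⟩
    have hy0 : f ((0:ℝ) • u + ((0:ℝ) + c) • v) ∈ f '' Dc := ⟨_, hmemD 0, rfl⟩
    rw [hM] at hyt hy0
    obtain ⟨r1, hr1⟩ := hyt
    obtain ⟨r2, hr2⟩ := hy0
    have hstep : f (t • u + (t + c) • v)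
        = (r1 - r2) • e + f ((0:ℝ) • u + ((0:ℝ) + c) • v) := by
      rw [hr1, hr2]; module
    rw [gridS h0 hA hB hUV t (t + c), gridS h0 hA hB hUV 0 ((0:ℝ) + c), hedec, ← hEeq] at hstep
    have h7 : sig f u t • f u + sig f v (t + c) • f v
        = ((r1 - r2) * E1 + sig f u 0) • f u + ((r1 - r2) * E1 + sig f v (0 + c)) • f v := by
      rw [hstep]; module
    obtain ⟨hc1, hc2⟩ := coords hUV h7
    rw [sig_zero h0 hA hB hu hfu] at hc1
    rw [zero_add, ← (sig_eq h0 hA hB hUV (t + c)).1, ← (sig_eq h0 hA hB hUV c).1] at hc2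
    linarith

lemma sig_mul (h0 : f 0 = 0) (hA : HLine f) (hB : HInj f)
    (hUV : ∀ r s : ℝ, r • f u + s • f v = 0 → r = 0 ∧ s = 0) (t c : ℝ) :
    sig f u (t * c) = sig f u t * sig f u c := by
  have hfu := fu_ne h0 hUV
  have hfv := fv_ne h0 hUV
  have hu := u_ne h0 hUV
  have hv := v_ne h0 hUV
  by_cases hc : c = 0
  · rw [hc, mul_zero, sig_zero h0 hA hB hu hfu, mul_zero]
  have hfz_eq : f (u + c • v) = f u + sig f v c • f v := by
    rw [show u + c • v = (1:ℝ) • u + c • v by module, gridS h0 hA hB hUV 1 c,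
      sig_one h0 hA hB hu hfu, one_smul]
  have hfz : f (u + c • v) ≠ 0 := by
    rw [hfz_eq]
    intro h
    have := hUV 1 (sig f v c) (by rw [one_smul, h])
    exact one_ne_zero this.1
  have hz : u + c • v ≠ 0 := fun h => hfz (by rw [h, h0])
  have h1 : f (t • (u + c • v)) = sig f (u + c • v) t • f (u + c • v) :=
    sig_spec h0 hA hB hz hfz t
  rw [hfz_eq] at h1
  rw [show t • (u + c • v) = t • u + (t * c) • v by module] at h1
  rw [smul_add, smul_smul, gridS h0 hA hB hUV t (t * c)] at h1
  obtain ⟨hc1, hc2⟩ := coords hUV h1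
  rw [(sig_eq h0 hA hB hUV (t * c)).1, hc2, ← hc1, ← (sig_eq h0 hA hB hUV c).1]

lemma sigma_id {σ : ℝ → ℝ} (hone : σ 1 = 1) (hmul : ∀ a b, σ (a * b) = σ a * σ b)
    (hzero : σ 0 = 0) (haddp : ∀ a b, σ (a + b) = σ a + σ b) (r : ℝ) : σ r = r := by
  let F : ℝ →+* ℝ := RingHom.mk' ⟨⟨σ, hone⟩, hmul⟩ haddp
  have hF : F = RingHom.id ℝ := Subsingleton.elim _ _
  calc σ r = F r := rfl
    _ = r := by rw [hF]; rfl

lemma sig_id (h0 : f 0 = 0) (hA : HLine f) (hB : HInj f)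
    (hUV : ∀ r s : ℝ, r • f u + s • f v = 0 → r = 0 ∧ s = 0) (r : ℝ) :
    sig f u r = r :=
  sigma_id (sig_one h0 hA hB (u_ne h0 hUV) (fu_ne h0 hUV))
    (fun a b => sig_mul h0 hA hB hUV a b)
    (sig_zero h0 hA hB (u_ne h0 hUV) (fu_ne h0 hUV))
    (fun a b => sig_add h0 hA hB hUV a b) r

lemma grid (h0 : f 0 = 0) (hA : HLine f) (hB : HInj f)
    (hUV : ∀ r s : ℝ, r • f u + s • f v = 0 → r = 0 ∧ s = 0) (a b : ℝ) :
    f (a • u + b • v) = a • f u + b • f v := by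
  have h2 := gridS h0 hA hB hUV a b
  rw [sig_id h0 hA hB hUV a, ← (sig_eq h0 hA hB hUV b).1, sig_id h0 hA hB hUV b] at h2
  exact h2

end Grid

section Glob

variable {f : X → Y}

lemma exist_indep (h0 : f 0 = 0) {a0 a1 : X}
    (hind : ∀ r s : ℝ, r • f a0 + s • f a1 = 0 → r = 0 ∧ s = 0)
    {x : X} (hx : f x ≠ 0) :
    ∃ a : X, ∀ r s : ℝ, r • f x + s • f a = 0 → r = 0 ∧ s = 0 := by
  by_cases h : ∀ r s : ℝ, r • f x + s • f a0 = 0 → r = 0 ∧ s = 0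
  · exact ⟨a0, h⟩
  push_neg at h
  obtain ⟨r, s, hrs, hne⟩ := h
  have hfa0 : f a0 ≠ 0 := fun hh => one_ne_zero (hind 1 0 (by rw [hh]; simp)).1
  have hs : s ≠ 0 := by
    intro h'
    rw [h', zero_smul, add_zero] at hrs
    rcases smul_eq_zero.mp hrs with h'' | h''
    · exact hne h'' h'
    · exact hx h''
  have ha0x : f a0 = (s⁻¹ * (-r)) • f x := by
    have h1 : s • f a0 = (-r) • f x := by
      rw [show s • f a0 = (r • f x + s • f a0) - r • f x by module, hrs]
      module
    calc f a0 = s⁻¹ • (s • f a0) := by rw [smul_smul, inv_mul_cancel₀ hs, one_smul]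
      _ = s⁻¹ • ((-r) • f x) := by rw [h1]
      _ = (s⁻¹ * (-r)) • f x := by rw [smul_smul]
  set al : ℝ := s⁻¹ * (-r) with hal
  have hal0 : al ≠ 0 := by
    intro h'
    rw [h', zero_smul] at ha0x
    exact hfa0 ha0x
  refine ⟨a1, ?_⟩
  intro r' s' h'
  by_cases hs' : s' = 0
  · refine ⟨?_, hs'⟩
    rw [hs', zero_smul, add_zero] at h'
    rcases smul_eq_zero.mp h' with h'' | h''
    · exact h''
    · exact absurd h'' hx
  · exfalso
    have ha1x : f a1 = (s'⁻¹ * (-r')) • f x := by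
      have h1 : s' • f a1 = (-r') • f x := by
        rw [show s' • f a1 = (r' • f x + s' • f a1) - r' • f x by module, h']
        module
      calc f a1 = s'⁻¹ • (s' • f a1) := by rw [smul_smul, inv_mul_cancel₀ hs', one_smul]
        _ = s'⁻¹ • ((-r') • f x) := by rw [h1]
        _ = (s'⁻¹ * (-r')) • f x := by rw [smul_smul]
    set be : ℝ := s'⁻¹ * (-r') with hbe
    have hcomb : be • f a0 + (-al) • f a1 = 0 := by
      rw [ha0x, ha1x]
      match_scalars
      ring
    exact hal0 (by have := (hind _ _ hcomb).2; linarith)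

lemma homog (h0 : f 0 = 0) (hA : HLine f) (hB : HInj f) {a0 a1 : X}
    (hind : ∀ r s : ℝ, r • f a0 + s • f a1 = 0 → r = 0 ∧ s = 0) :
    ∀ (c : ℝ) (x : X), f (c • x) = c • f x := by
  intro c x
  by_cases hx0 : x = 0
  · rw [hx0, smul_zero, h0, smul_zero]
  by_cases hfx : f x = 0
  · have h00 : (0 : X) ∈ zl x := zero_mem_zl x
    have hxx : x ∈ zl x := by simpa using mem_zl 1 x
    have hpq : (0 : X) ≠ x := fun h => hx0 h.symm
    have hval : f (0 : X) = f x := by rw [h0, hfx]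
    have hcol := collapse hA hB (isLine_zl hx0) h00 hxx hpq hval
    have h1 := hcol (c • x) (mem_zl c x)
    rw [h1, h0, hfx, smul_zero]
  · obtain ⟨a, ha⟩ := exist_indep h0 hind hfx
    have := grid h0 hA hB ha c 0
    simpa using this

lemma zero_trans (h0 : f 0 = 0) (hA : HLine f) (hB : HInj f)
    (hH : ∀ (c : ℝ) (x : X), f (c • x) = c • f x)
    {y : X} (hy : f y = 0) (x : X) : f (x + y) = f x := by
  by_cases hy0 : y = 0
  · rw [hy0, add_zero]
  have hyc : ∀ c : ℝ, f (c • y) = 0 := fun c => by rw [hH, hy, smul_zero]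
  by_cases hxr : ∃ c : ℝ, x = c • y
  · obtain ⟨c, rfl⟩ := hxr
    rw [show c • y + y = (c+1) • y by module, hyc]
    rw [hyc]
  have hindXY : ∀ p q : ℝ, p • x + q • y = 0 → p = 0 := by
    intro p q h
    by_cases hp : p = 0
    · exact hp
    exfalso
    apply hxr
    refine ⟨p⁻¹ * (-q), ?_⟩
    have h1 : p • x = (-q) • y := by
      rw [show p • x = (p • x + q • y) - q • y by module, h]
      module
    calc x = p⁻¹ • (p • x) := by rw [smul_smul, inv_mul_cancel₀ hp, one_smul]
      _ = p⁻¹ • ((-q) • y) := by rw [h1]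
      _ = (p⁻¹ * (-q)) • y := by rw [smul_smul]
  by_cases hfx : f x = 0
  · have hne : (2:ℝ) • x ≠ (2:ℝ) • y := by
      intro h
      exact absurd (hindXY 2 (-2) (by rw [show (2:ℝ) • x + (-2:ℝ) • y
        = (2:ℝ) • x - (2:ℝ) • y by module, h, sub_self])) two_ne_zero
    have hval : f ((2:ℝ) • x) = f ((2:ℝ) • y) := by rw [hH, hH, hfx, hy]
    have hcol := collapse hA hB (isLine_lt hne) (mem_lt_left _ _) (mem_lt_right _ _) hne hval
    have hmem : x + y ∈ lt' ((2:ℝ) • x) ((2:ℝ) • y) := ⟨1/2, by module⟩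
    have h1 := hcol _ hmem
    rw [hH, hfx, smul_zero] at h1
    rw [h1, hfx]
  · have sub1 : ∀ t : ℝ, ∃ c : ℝ, f (x + t • y) = c • f x := by
      intro t
      by_cases ht : t = 0
      · exact ⟨1, by rw [ht, zero_smul, add_zero, one_smul]⟩
      have hne : (2:ℝ) • x ≠ (2*t) • y := by
        intro h
        exact absurd (hindXY 2 (-(2*t)) (by rw [show (2:ℝ) • x + (-(2*t)) • y
          = (2:ℝ) • x - (2*t) • y by module, h, sub_self])) two_ne_zero
      have hmem : x + t • y ∈ lt' ((2:ℝ) • x) ((2*t) • y) := ⟨1/2, by module⟩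
      have hfA : f ((2:ℝ) • x) = (2:ℝ) • f x := hH 2 x
      have hfB : f ((2*t) • y) = 0 := hyc (2*t)
      have hfAB : f ((2:ℝ) • x) ≠ f ((2*t) • y) := by
        rw [hfA, hfB]
        intro h
        rcases smul_eq_zero.mp h with h' | h'
        · norm_num at h'
        · exact hfx h'
      rcases hA _ (isLine_lt hne) with ⟨y0, hpt⟩ | hll
      · exfalso
        have e0 : f ((2:ℝ) • x) = y0 := by
          have h1 : f ((2:ℝ) • x) ∈ f '' lt' ((2:ℝ) • x) ((2*t) • y) :=
            ⟨_, mem_lt_left _ _, rfl⟩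
          rwa [hpt, Set.mem_singleton_iff] at h1
        have e1 : f ((2*t) • y) = y0 := by
          have h1 : f ((2*t) • y) ∈ f '' lt' ((2:ℝ) • x) ((2*t) • y) :=
            ⟨_, mem_lt_right _ _, rfl⟩
          rwa [hpt, Set.mem_singleton_iff] at h1
        exact hfAB (e0.trans e1.symm)
      · have heq := line_eq_lt hll ⟨_, mem_lt_left _ _, rfl⟩ ⟨_, mem_lt_right _ _, rfl⟩ hfAB
        have hm2 : f (x + t • y) ∈ f '' lt' ((2:ℝ) • x) ((2*t) • y) := ⟨_, hmem, rfl⟩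
        rw [heq] at hm2
        obtain ⟨s, hs⟩ := hm2
        exact ⟨2 - s*2, by rw [hs, hfA, hfB]; module⟩
    set L : Set X := {z | ∃ t : ℝ, z = t • y + x} with hLdef
    have hL : IsLine L := ⟨x, y, hy0, rfl⟩
    have hmemL : ∀ t : ℝ, x + t • y ∈ L := fun t => ⟨t, by module⟩
    have hval2 : ∀ z ∈ L, ∃ c : ℝ, f z = c • f x := by
      rintro z ⟨t, rfl⟩
      obtain ⟨c, hc⟩ := sub1 t
      exact ⟨c, by rw [show t • y + x = x + t • y by module, hc]⟩
    rcases hA L hL with ⟨y0, hpt⟩ | hll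
    · have e1 : f (x + (1:ℝ) • y) = y0 := by
        have h1 : f (x + (1:ℝ) • y) ∈ f '' L := ⟨_, hmemL 1, rfl⟩
        rwa [hpt, Set.mem_singleton_iff] at h1
      have e0 : f (x + (0:ℝ) • y) = y0 := by
        have h1 : f (x + (0:ℝ) • y) ∈ f '' L := ⟨_, hmemL 0, rfl⟩
        rwa [hpt, Set.mem_singleton_iff] at h1
      rw [one_smul] at e1
      rw [zero_smul, add_zero] at e0
      rw [e1, e0]
    · exfalso
      obtain ⟨o, e, he, hM⟩ := hll
      obtain ⟨xo, hxo, hfxo⟩ : o ∈ f '' L := by rw [hM]; exact ⟨0, by module⟩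
      obtain ⟨xp, hxp, hfxp⟩ : e + o ∈ f '' L := by rw [hM]; exact ⟨1, by rw [one_smul]⟩
      obtain ⟨co, hco⟩ := hval2 xo hxo
      obtain ⟨cp, hcp⟩ := hval2 xp hxp
      rw [hfxo] at hco
      rw [hfxp] at hcp
      have hedec : e = (cp - co) • f x := by
        rw [show e = (e + o) - o by abel, hcp, hco]; module
      have hcpco : cp - co ≠ 0 := by
        intro h
        exact he (by rw [hedec, h, zero_smul])
      have h2fx : (2:ℝ) • f x ∈ f '' L := by
        rw [hM]
        refine ⟨(2 - co)/(cp - co), ?_⟩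
        rw [hedec, hco]
        have hdm : (2 - co)/(cp - co) * (cp - co) = 2 - co := div_mul_cancel₀ _ hcpco
        match_scalars
        linarith
      obtain ⟨p, hp, hfp⟩ := h2fx
      obtain ⟨t1, rfl⟩ := hp
      have hpne : t1 • y + x ≠ (2:ℝ) • x := by
        intro h
        have h2 : (-1 : ℝ) • x + t1 • y = 0 := by
          rw [show (-1:ℝ) • x + t1 • y = (t1 • y + x) - (2:ℝ) • x by module, h, sub_self]
        have := hindXY (-1) t1 (by rw [show (-1:ℝ) • x + t1 • y = (-1:ℝ) • x + t1 • y from rfl] at h2; exact h2)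
        norm_num at this
      have hval3 : f (t1 • y + x) = f ((2:ℝ) • x) := by rw [hfp, hH]
      have hcol := collapse hA hB (isLine_lt hpne) (mem_lt_left _ _) (mem_lt_right _ _)
        hpne hval3
      have hz : ((-1:ℝ) • ((2:ℝ) • x - (t1 • y + x)) + (t1 • y + x)) = (2*t1) • y := by module
      have hzmem : ((-1:ℝ) • ((2:ℝ) • x - (t1 • y + x)) + (t1 • y + x))
          ∈ lt' (t1 • y + x) ((2:ℝ) • x) := ⟨-1, rfl⟩
      have h3 := hcol _ hzmem
      rw [hz, hyc, hfp] at h3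
      rcases smul_eq_zero.mp h3.symm with h' | h'
      · norm_num at h'
      · exact hfx h'

lemma additive (h0 : f 0 = 0) (hA : HLine f) (hB : HInj f) {a0 a1 : X}
    (hind : ∀ r s : ℝ, r • f a0 + s • f a1 = 0 → r = 0 ∧ s = 0) :
    ∀ x y : X, f (x + y) = f x + f y := by
  have hH := homog h0 hA hB hind
  intro x y
  by_cases hfx : f x = 0
  · rw [add_comm, zero_trans h0 hA hB hH hfx y, hfx, zero_add]
  by_cases hfy : f y = 0
  · rw [zero_trans h0 hA hB hH hfy x, hfy, add_zero]
  have dich : ∀ z w : X, f z ≠ 0 → f w ≠ 0 →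
      (∀ r s : ℝ, r • f z + s • f w = 0 → r = 0 ∧ s = 0) ∨
        ∃ k : ℝ, k ≠ 0 ∧ f w = k • f z := by
    intro z w hz hw
    by_cases h : ∀ r s : ℝ, r • f z + s • f w = 0 → r = 0 ∧ s = 0
    · exact Or.inl h
    right
    push_neg at h
    obtain ⟨r, s, hrs, hne⟩ := h
    have hs : s ≠ 0 := by
      intro h'
      rw [h', zero_smul, add_zero] at hrs
      rcases smul_eq_zero.mp hrs with h'' | h''
      · exact hne h'' h'
      · exact hz h''
    have hw_eq : f w = (s⁻¹ * (-r)) • f z := by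
      have h1 : s • f w = (-r) • f z := by
        rw [show s • f w = (r • f z + s • f w) - r • f z by module, hrs]
        module
      calc f w = s⁻¹ • (s • f w) := by rw [smul_smul, inv_mul_cancel₀ hs, one_smul]
        _ = s⁻¹ • ((-r) • f z) := by rw [h1]
        _ = (s⁻¹ * (-r)) • f z := by rw [smul_smul]
    refine ⟨s⁻¹ * (-r), fun h' => hw (by rw [hw_eq, h', zero_smul]), hw_eq⟩
  rcases dich x y hfx hfy with hid | ⟨k, hk, hky⟩
  · have := grid h0 hA hB hid 1 1
    simpa using this
  · obtain ⟨a, hxa⟩ := exist_indep h0 hind hfx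
    have hfa : f a ≠ 0 := fun h => one_ne_zero (hxa 0 1 (by rw [h]; simp)).2
    have hfxa : f (x + a) = f x + f a := by
      have := grid h0 hA hB hxa 1 1
      simpa using this
    have hind1 : ∀ r s : ℝ, r • f (x + a) + s • f y = 0 → r = 0 ∧ s = 0 := by
      intro r s h
      rw [hfxa, hky] at h
      have h2 : (r + s*k) • f x + r • f a = 0 := by
        rw [show (r + s*k) • f x + r • f a = r • (f x + f a) + s • (k • f x) by module, h]
      obtain ⟨h3, h4⟩ := hxa _ _ h2
      refine ⟨h4, ?_⟩
      rw [h4, zero_add] at h3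
      rcases mul_eq_zero.mp h3 with h' | h'
      · exact h'
      · exact absurd h' hk
    have key1 : f ((x + a) + y) = f x + f a + k • f x := by
      have := grid h0 hA hB hind1 1 1
      rw [one_smul, one_smul, one_smul, one_smul] at this
      rw [this, hfxa, hky]
    by_cases hfw : f (x + y) = 0
    · have hkey : f a = f x + f a + k • f x := by
        rw [show (x + a) + y = a + (x + y) by abel] at key1
        rw [zero_trans h0 hA hB hH hfw a] at key1
        exact key1
      have h6 : f x + k • f x = (f x + f a + k • f x) - f a := by module
      rw [← hkey, sub_self] at h6
      rw [hfw, hky]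
      exact h6.symm
    · rcases dich a (x + y) hfa hfw with hid2 | ⟨m, hm, hma⟩
      · have h5 : f (a + (x + y)) = f a + f (x + y) := by
          have := grid h0 hA hB hid2 1 1
          simpa using this
        have h6 : f (a + (x + y)) = f x + f a + k • f x := by
          rw [show a + (x + y) = (x + a) + y by abel, key1]
        have h7 : f a + f (x + y) = f x + f a + k • f x := by rw [← h5, h6]
        have h8 : f (x + y) = (f a + f (x + y)) - f a := by module
        rw [h7] at h8
        rw [h8, hky]
        module
      · exfalso
        have hind3 : ∀ r s : ℝ, r • f (x + y) + s • f x = 0 → r = 0 ∧ s = 0 := by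
          intro r s h
          rw [hma] at h
          have h2 : s • f x + (r*m) • f a = 0 := by
            rw [show s • f x + (r*m) • f a = r • (m • f a) + s • f x by module, h]
          obtain ⟨h3, h4⟩ := hxa _ _ h2
          refine ⟨?_, h3⟩
          rcases mul_eq_zero.mp h4 with h' | h'
          · exact h'
          · exact absurd h' hm
        have h5 : f ((x + y) + x) = m • f a + f x := by
          have := grid h0 hA hB hind3 1 1
          rw [one_smul, one_smul, one_smul, one_smul] at this
          rw [this, hma]
        have hind4 : ∀ r s : ℝ, r • f ((x + y) + x) + s • f y = 0 → r = 0 ∧ s = 0 := by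
          intro r s h
          rw [h5, hky] at h
          have h2 : (r + s*k) • f x + (r*m) • f a = 0 := by
            rw [show (r + s*k) • f x + (r*m) • f a
              = r • (m • f a + f x) + s • (k • f x) by module, h]
          obtain ⟨h3, h4⟩ := hxa _ _ h2
          have hr : r = 0 := by
            rcases mul_eq_zero.mp h4 with h' | h'
            · exact h'
            · exact absurd h' hm
          refine ⟨hr, ?_⟩
          rw [hr, zero_add] at h3
          rcases mul_eq_zero.mp h3 with h' | h'
          · exact h'
          · exact absurd h' hk
        have h6 : f (((x + y) + x) + y) = (m • f a + f x) + k • f x := by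
          have := grid h0 hA hB hind4 1 1
          rw [one_smul, one_smul, one_smul, one_smul] at this
          rw [this, h5, hky]
        rw [show ((x + y) + x) + y = (2:ℝ) • (x + y) by module, hH 2 (x + y), hma] at h6
        have h8 : (1 + k) • f x + (-m) • f a = 0 := by
          rw [show (1 + k) • f x + (-m) • f a
            = ((m • f a + f x) + k • f x) - (2:ℝ) • (m • f a) by module, ← h6, sub_self]
        exact hm (by have := (hxa _ _ h8).2; linarith)

end Glob

end LinePre

theorem linear_iff_line_preserving
    {X Y : Type*} [AddCommGroup X] [Module ℝ X] [AddCommGroup Y] [Module ℝ Y]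
    (f : X → Y) (h0 : f 0 = 0)
    (hind : ∃ a₀ a₁ : X, ∀ r s : ℝ, r • f a₀ + s • f a₁ = 0 → r = 0 ∧ s = 0) :
    ((∀ (c : ℝ) (a : X), f (c • a) = c • f a) ∧
        (∀ a b : X, f (a + b) = f a + f b)) ↔
      ((∀ L : Set X, IsLine L → IsPoint (f '' L) ∨ IsLine (f '' L)) ∧
        (∀ L : Set X, IsLine L → IsLine (f '' L) → Set.InjOn f L)) := by
  constructor
  · rintro ⟨hs, ha⟩
    have him : ∀ (o d : X) (r : ℝ), f (r • d + o) = r • f d + f o := by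
      intro o d r
      rw [ha, hs]
    constructor
    · rintro L ⟨o, d, hd, rfl⟩
      by_cases hfd : f d = 0
      · left
        refine ⟨f o, ?_⟩
        ext y
        simp only [Set.mem_image, Set.mem_setOf_eq, Set.mem_singleton_iff]
        constructor
        · rintro ⟨x, ⟨r, rfl⟩, rfl⟩
          rw [him, hfd, smul_zero, zero_add]
        · rintro rfl
          exact ⟨o, ⟨0, by rw [zero_smul, zero_add]⟩, rfl⟩
      · right
        refine ⟨f o, f d, hfd, ?_⟩
        ext y
        simp only [Set.mem_image, Set.mem_setOf_eq]
        constructor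
        · rintro ⟨x, ⟨r, rfl⟩, rfl⟩
          exact ⟨r, (him o d r).symm ▸ rfl⟩
        · rintro ⟨r, rfl⟩
          exact ⟨r • d + o, ⟨r, rfl⟩, him o d r⟩
    · rintro L ⟨o, d, hd, rfl⟩ hIm x1 hx1 x2 hx2 hfeq
      obtain ⟨r1, rfl⟩ := hx1
      obtain ⟨r2, rfl⟩ := hx2
      by_cases hfd : f d = 0
      · exfalso
        have hsingle : f '' {x | ∃ r : ℝ, x = r • d + o} = {f o} := by
          ext y
          simp only [Set.mem_image, Set.mem_setOf_eq, Set.mem_singleton_iff]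
          constructor
          · rintro ⟨x, ⟨r, rfl⟩, rfl⟩
            rw [him, hfd, smul_zero, zero_add]
          · rintro rfl
            exact ⟨o, ⟨0, by rw [zero_smul, zero_add]⟩, rfl⟩
        rw [hsingle] at hIm
        exact LinePre.not_isLine_singleton (f o) hIm
      · rw [him, him] at hfeq
        have h2 : r1 • f d = r2 • f d := by
          rw [show r1 • f d = (r1 • f d + f o) - f o by module, hfeq]
          module
        rw [smul_left_injective ℝ hfd h2]
  · rintro ⟨hA, hB⟩
    obtain ⟨a0, a1, hpair⟩ := hind
    exact ⟨LinePre.homog h0 hA hB hpair, LinePre.additive h0 hA hB hpair⟩
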